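/- Noncommutative de Moivre formula: for every natural number n and all integers p, q, one has e(p,q)^n = e(np, nq), and consequently evaluating the dilated Chebyshev polynomial T_n (defined by T_0 = 2, T_1 = X, T_{n+1} = X·T_n − T_{n−1}) at the element C(p,q) ∈ A yields T_n(C(p,q)) = C(np, nq). (This justifies the convention that the skein (np,nq)_T, the (p,q)-curve colored by T_n, corresponds to the cosine C(np,nq).) -/

import Mathlib

open Polynomial

/-- The dilated Chebyshev polynomials of the first kind:
`T 0 = 2`, `T 1 = X`, `T (n+2) = X * T (n+1) - T n`. -/
noncomputable def dilChebT : ℕ → Polynomial ℂ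
  | 0 => 2
  | 1 => X
  | n + 2 => X * dilChebT (n + 1) - dilChebT n

/-- noncommutative de Moivre formula: `e(p,q)^n = e(np,nq)`, and
consequently `T_n(C(p,q)) = C(np,nq)`. -/
theorem de_moivre (t : ℂ) (ht : t ≠ 0) (A : Type*) [Ring A] [Algebra ℂ A]
    (l m : Aˣ) (rel : (l : A) * (m : A) = t ^ 2 • ((m : A) * (l : A)))
    (e : ℤ → ℤ → A)
    (he : ∀ p q : ℤ, e p q = t ^ (-(p * q)) • ((l ^ p * m ^ q : Aˣ) : A))
    (Cos : ℤ → ℤ → A)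
    (hC : ∀ p q : ℤ, Cos p q = e p q + e (-p) (-q)) :
    ∀ (n : ℕ) (p q : ℤ),
      e p q ^ n = e ((n : ℤ) * p) ((n : ℤ) * q) ∧
      Polynomial.aeval (Cos p q) (dilChebT n) = Cos ((n : ℤ) * p) ((n : ℤ) * q) := by
  have hml : (m : A) * (l : A) = (t ^ (-2 : ℤ)) • ((l : A) * (m : A)) := by
    rw [rel, smul_smul, ← zpow_natCast t 2, ← zpow_add₀ ht]
    norm_num
  have hml' : (m : A) * ((l⁻¹ : Aˣ) : A) = (t ^ (2 : ℤ)) • (((l⁻¹ : Aˣ) : A) * (m : A)) := by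
    have h1 : (m : A) = ((l⁻¹ : Aˣ) : A) * ((l : A) * (m : A)) := by
      rw [← mul_assoc, Units.inv_mul, one_mul]
    calc (m : A) * ((l⁻¹ : Aˣ) : A)
        = ((l⁻¹ : Aˣ) : A) * ((l : A) * (m : A)) * ((l⁻¹ : Aˣ) : A) := by rw [← h1]
      _ = ((l⁻¹ : Aˣ) : A) * (t ^ 2 • ((m : A) * (l : A))) * ((l⁻¹ : Aˣ) : A) := by rw [rel]
      _ = t ^ 2 • (((l⁻¹ : Aˣ) : A) * (m : A) * ((l : A) * ((l⁻¹ : Aˣ) : A))) := by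
          rw [mul_smul_comm, smul_mul_assoc, mul_assoc, mul_assoc, mul_assoc]
      _ = (t ^ (2 : ℤ)) • (((l⁻¹ : Aˣ) : A) * (m : A)) := by
          rw [Units.mul_inv, mul_one, ← zpow_natCast t 2]; norm_num
  have key1 : ∀ p : ℤ, (m : A) * ((l ^ p : Aˣ) : A)
      = (t ^ (-2 * p)) • (((l ^ p : Aˣ) : A) * (m : A)) := by
    intro p
    induction p using Int.induction_on with
    | zero => simp
    | succ k ih =>
        have h1 : ((l ^ ((k : ℤ) + 1) : Aˣ) : A) = ((l ^ (k:ℤ) : Aˣ) : A) * (l : A) := by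
          rw [zpow_add, zpow_one, Units.val_mul]
        rw [h1, ← mul_assoc, ih, smul_mul_assoc, mul_assoc, hml, mul_smul_comm,
          smul_smul, ← zpow_add₀ ht, ← mul_assoc]
        congr 1
        ring_nf
    | pred k ih =>
        have h1 : ((l ^ (-(k : ℤ) - 1) : Aˣ) : A) = ((l ^ (-(k:ℤ)) : Aˣ) : A) * ((l⁻¹ : Aˣ) : A) := by
          rw [show (-(k:ℤ) - 1) = (-k) + (-1) from by ring, zpow_add, zpow_neg_one, Units.val_mul]
        rw [h1, ← mul_assoc, ih, smul_mul_assoc, mul_assoc, hml', mul_smul_comm,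
          smul_smul, ← zpow_add₀ ht, ← mul_assoc]
        congr 1
        ring_nf
  have hxm : ∀ p : ℤ, ((l ^ p : Aˣ) : A) * (m : A)
      = (t ^ (2 * p)) • ((m : A) * ((l ^ p : Aˣ) : A)) := by
    intro p
    rw [key1 p, smul_smul, ← zpow_add₀ ht]
    norm_num
  have key1' : ∀ p : ℤ, ((m⁻¹ : Aˣ) : A) * ((l ^ p : Aˣ) : A)
      = (t ^ (2 * p)) • (((l ^ p : Aˣ) : A) * ((m⁻¹ : Aˣ) : A)) := by
    intro p
    calc ((m⁻¹ : Aˣ) : A) * ((l ^ p : Aˣ) : A)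
        = ((m⁻¹ : Aˣ) : A) * (((l ^ p : Aˣ) : A) * ((m : A) * ((m⁻¹ : Aˣ) : A))) := by
          rw [Units.mul_inv, mul_one]
      _ = ((m⁻¹ : Aˣ) : A) * ((((l ^ p : Aˣ) : A) * (m : A)) * ((m⁻¹ : Aˣ) : A)) := by
          rw [mul_assoc]
      _ = ((m⁻¹ : Aˣ) : A) * (((t ^ (2 * p)) • ((m : A) * ((l ^ p : Aˣ) : A))) * ((m⁻¹ : Aˣ) : A)) := by
          rw [hxm]
      _ = (t ^ (2 * p)) • (((m⁻¹ : Aˣ) : A) * (m : A) * (((l ^ p : Aˣ) : A) * ((m⁻¹ : Aˣ) : A))) := by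
          rw [smul_mul_assoc, mul_smul_comm]
          congr 1
          simp [mul_assoc]
      _ = (t ^ (2 * p)) • (((l ^ p : Aˣ) : A) * ((m⁻¹ : Aˣ) : A)) := by
          rw [Units.inv_mul, one_mul]
  have key2 : ∀ p q : ℤ, ((m ^ q : Aˣ) : A) * ((l ^ p : Aˣ) : A)
      = (t ^ (-2 * p * q)) • (((l ^ p : Aˣ) : A) * ((m ^ q : Aˣ) : A)) := by
    intro p q
    induction q using Int.induction_on with
    | zero => simp
    | succ k ih =>
        have h1 : ((m ^ ((k : ℤ) + 1) : Aˣ) : A) = ((m ^ (k:ℤ) : Aˣ) : A) * (m : A) := by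
          rw [zpow_add, zpow_one, Units.val_mul]
        rw [h1, mul_assoc, key1, mul_smul_comm, ← mul_assoc, ih, smul_mul_assoc,
          smul_smul, ← zpow_add₀ ht, mul_assoc, mul_assoc]
        congr 1
        ring_nf
    | pred k ih =>
        have h1 : ((m ^ (-(k : ℤ) - 1) : Aˣ) : A) = ((m ^ (-(k:ℤ)) : Aˣ) : A) * ((m⁻¹ : Aˣ) : A) := by
          rw [show (-(k:ℤ) - 1) = (-k) + (-1) from by ring, zpow_add, zpow_neg_one, Units.val_mul]
        rw [h1, mul_assoc, key1', mul_smul_comm, ← mul_assoc, ih, smul_mul_assoc,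
          smul_smul, ← zpow_add₀ ht, mul_assoc, mul_assoc]
        congr 1
        ring_nf
  have prodE : ∀ p q r s : ℤ, e p q * e r s = (t ^ (p * s - q * r)) • e (p + r) (q + s) := by
    intro p q r s
    rw [he, he, he]
    simp only [Units.val_mul, smul_mul_assoc, mul_smul_comm, smul_smul]
    rw [mul_assoc ((l ^ p : Aˣ) : A), ← mul_assoc ((m ^ q : Aˣ) : A), key2 r q]
    simp only [smul_mul_assoc, mul_smul_comm, smul_smul]
    simp only [← zpow_add₀ ht]
    have hA : ((l ^ p : Aˣ) : A) * (((l ^ r : Aˣ) : A) * ((m ^ q : Aˣ) : A) * ((m ^ s : Aˣ) : A))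
        = ((l ^ (p + r) : Aˣ) : A) * ((m ^ (q + s) : Aˣ) : A) := by
      rw [zpow_add, zpow_add, Units.val_mul, Units.val_mul]
      simp [mul_assoc]
    rw [hA]
    congr 1
    ring
  have he0 : e 0 0 = 1 := by rw [he]; simp
  have epow : ∀ (n : ℕ) (p q : ℤ), e p q ^ n = e ((n : ℤ) * p) ((n : ℤ) * q) := by
    intro n p q
    induction n with
    | zero => simpa using he0.symm
    | succ k ih =>
        rw [pow_succ, ih, prodE]
        have h0 : (k : ℤ) * p * q - (k : ℤ) * q * p = 0 := by ring
        rw [h0, zpow_zero, one_smul]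
        congr 1 <;> push_cast <;> ring
  have prodE0 : ∀ a b c d : ℤ, a * d - b * c = 0 → e a b * e c d = e (a + c) (b + d) := by
    intro a b c d h
    rw [prodE, h, zpow_zero, one_smul]
  have cosmul : ∀ (p q k : ℤ), Cos p q * Cos (k * p) (k * q)
      = Cos ((k + 1) * p) ((k + 1) * q) + Cos ((k - 1) * p) ((k - 1) * q) := by
    intro p q k
    rw [hC p q, hC (k * p) (k * q), hC ((k+1)*p) ((k+1)*q), hC ((k-1)*p) ((k-1)*q)]
    rw [add_mul, mul_add, mul_add]
    rw [prodE0 p q (k*p) (k*q) (by ring), prodE0 p q (-(k*p)) (-(k*q)) (by ring),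
      prodE0 (-p) (-q) (k*p) (k*q) (by ring), prodE0 (-p) (-q) (-(k*p)) (-(k*q)) (by ring)]
    have h1 : p + k * p = (k + 1) * p := by ring
    have h2 : q + k * q = (k + 1) * q := by ring
    have h3 : p + -(k * p) = -((k - 1) * p) := by ring
    have h4 : q + -(k * q) = -((k - 1) * q) := by ring
    have h5 : -p + k * p = (k - 1) * p := by ring
    have h6 : -q + k * q = (k - 1) * q := by ring
    have h7 : -p + -(k * p) = -((k + 1) * p) := by ring
    have h8 : -q + -(k * q) = -((k + 1) * q) := by ring
    rw [h1, h2, h3, h4, h5, h6, h7, h8]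
    abel
  have cheb : ∀ (n : ℕ) (p q : ℤ),
      Polynomial.aeval (Cos p q) (dilChebT n) = Cos ((n : ℤ) * p) ((n : ℤ) * q) := by
    have main : ∀ (n : ℕ) (p q : ℤ),
        (Polynomial.aeval (Cos p q) (dilChebT n) = Cos ((n : ℤ) * p) ((n : ℤ) * q)) ∧
        (Polynomial.aeval (Cos p q) (dilChebT (n+1)) = Cos (((n:ℤ) + 1) * p) (((n:ℤ) + 1) * q)) := by
      intro n
      induction n with
      | zero =>
          intro p q
          constructor
          · show Polynomial.aeval (Cos p q) (2 : Polynomial ℂ) = _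
            simp only [Nat.cast_zero, zero_mul, map_ofNat]
            rw [hC, neg_zero, he0]
            norm_num
          · show Polynomial.aeval (Cos p q) (X : Polynomial ℂ) = _
            simp
      | succ k ih =>
          intro p q
          refine ⟨(ih p q).2, ?_⟩
          have hrec : dilChebT (k + 2) = X * dilChebT (k + 1) - dilChebT k := rfl
          rw [show k + 1 + 1 = k + 2 from rfl, hrec, map_sub, map_mul, aeval_X,
            (ih p q).2, (ih p q).1, cosmul p q ((k : ℤ) + 1)]
          have h1 : ((k : ℤ) + 1 - 1) = (k : ℤ) := by ring
          rw [h1, add_sub_cancel_right]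
          push_cast
          ring_nf
    intro n p q
    exact (main n p q).1
  intro n p q
  exact ⟨epow n p q, cheb n p q⟩
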